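/- arXiv:2509.18860 — 2 statements merged into one kernel-verified Lean document; each statement's English description precedes it below -/
import Mathlib

section
/- Positive integers k and n satisfy (k!)^(n!) + k^n = (n!)^(k!) + n^k if and only if k = n. -/
open Nat

lemma aux_two_pow (m : ℕ) : 2 * (m + 4) ≤ 2 ^ (m + 3) := by
  induction m with
  | zero => norm_num
  | succ m ih =>
      have h2 : (2:ℕ) ≤ 2 ^ (m + 3) := by
        calc (2:ℕ) = 2 ^ 1 := rfl
        _ ≤ 2 ^ (m + 3) := Nat.pow_le_pow_right (by norm_num) (by omega)
      calc 2 * (m + 1 + 4) = 2 * (m + 4) + 2 := by ring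
      _ ≤ 2 ^ (m + 3) + 2 ^ (m + 3) := by omega
      _ = 2 ^ (m + 1 + 3) := by ring

-- key inequality for 2 ≤ k < n
lemma key_ineq (k n : ℕ) (hk : 2 ≤ k) (hkn : k < n) :
    (n !) ^ (k !) + n ^ k < (k !) ^ (n !) + k ^ n := by
  have hnk : n ^ k ≤ (n !) ^ (k !) := by
    calc n ^ k ≤ (n !) ^ k := Nat.pow_le_pow_left (Nat.self_le_factorial n) k
    _ ≤ (n !) ^ (k !) := Nat.pow_le_pow_right (Nat.factorial_pos n)
        (Nat.self_le_factorial k)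
  have hkpos : 0 < k ^ n := Nat.pow_pos (by omega)
  by_cases hsmall : n = 3
  · -- then k = 2
    have hk2 : k = 2 := by omega
    subst hk2; subst hsmall
    norm_num [Nat.factorial]
  · -- n ≥ 4
    have hn4 : 4 ≤ n := by omega
    -- P = n!/k!
    have hdvd : k ! ∣ n ! := Nat.factorial_dvd_factorial (le_of_lt hkn)
    obtain ⟨P, hP⟩ := hdvd
    have hkf : 2 ≤ k ! := by
      calc 2 ≤ k := hk
      _ ≤ k ! := Nat.self_le_factorial k
    have hkfpos : 0 < k ! := by omega
    -- P ≥ n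
    have hPn : n ≤ P := by
      have hfle : k ! ≤ (n-1)! := Nat.factorial_le (show k ≤ n - 1 by omega)
      have h0 : n * k ! ≤ n * (n-1)! := Nat.mul_le_mul_left n hfle
      have h1 : n * (n-1)! = n ! := by
        have hsucc : n = (n - 1) + 1 := by omega
        conv_rhs => rw [hsucc, Nat.factorial_succ]
        rw [← hsucc]
      have h2 : n * k ! ≤ n ! := by omega
      rw [hP] at h2
      have h3 : k ! * n ≤ k ! * P := by linarith
      exact Nat.le_of_mul_le_mul_left h3 hkfpos
    have hP4 : 4 ≤ P := by omega
    -- (k!)^P ≥ 2 * n!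
    have hstep : 2 * n ! ≤ (k !) ^ P := by
      have hPsplit : P = (P - 1) + 1 := by omega
      have h2p : 2 * P ≤ 2 ^ (P - 1) := by
        have := aux_two_pow (P - 4)
        have e1 : P - 4 + 4 = P := by omega
        have e2 : P - 4 + 3 = P - 1 := by omega
        rw [e1, e2] at this; exact this
      calc 2 * n ! = 2 * (k ! * P) := by rw [hP]
      _ = (2 * P) * k ! := by ring
      _ ≤ 2 ^ (P - 1) * k ! := Nat.mul_le_mul_right _ h2p
      _ ≤ (k !) ^ (P - 1) * k ! := Nat.mul_le_mul_right _
          (Nat.pow_le_pow_left hkf _)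
      _ = (k !) ^ ((P - 1) + 1) := (Nat.pow_succ _ _).symm
      _ = (k !) ^ P := by rw [← hPsplit]
    -- (k!)^(n!) ≥ 2 * (n!)^(k!)
    have hmain : 2 * (n !) ^ (k !) ≤ (k !) ^ (n !) := by
      calc 2 * (n !) ^ (k !) ≤ 2 ^ (k !) * (n !) ^ (k !) := by
            apply Nat.mul_le_mul_right
            calc 2 = 2 ^ 1 := rfl
            _ ≤ 2 ^ (k !) := Nat.pow_le_pow_right (by norm_num) hkfpos
      _ = (2 * n !) ^ (k !) := (Nat.mul_pow 2 (n !) (k !)).symm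
      _ ≤ ((k !) ^ P) ^ (k !) := Nat.pow_le_pow_left hstep _
      _ = (k !) ^ (P * k !) := (pow_mul (k !) P (k !)).symm
      _ = (k !) ^ (n !) := by rw [Nat.mul_comm, ← hP]
    omega

theorem stmt_9 (k n : ℕ) (hk : 0 < k) (hn : 0 < n) :
    ((Nat.factorial k) ^ (Nat.factorial n) + k ^ n =
      (Nat.factorial n) ^ (Nat.factorial k) + n ^ k) ↔ k = n := by
  constructor
  · intro h
    by_contra hne
    -- helper: for any a < b (both pos), equality fails
    have main : ∀ a b : ℕ, 0 < a → a < b →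
        (a !) ^ (b !) + a ^ b ≠ (b !) ^ (a !) + b ^ a := by
      intro a b ha hab
      rcases Nat.lt_or_ge a 2 with h1 | h2
      · -- a = 1
        have ha1 : a = 1 := by omega
        subst ha1
        simp [Nat.factorial]
        have hb2 : 2 ≤ b := hab
        have : 2 ≤ b ! := by
          calc 2 ≤ b := hb2
          _ ≤ b ! := Nat.self_le_factorial b
        omega
      · intro heq
        have := key_ineq a b h2 hab
        omega
    rcases Nat.lt_trichotomy k n with hlt | heq | hgt
    · exact main k n hk hlt h
    · exact hne heq
    · exact main n k hn hgt h.symm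
  · rintro rfl; rfl
end

section
/- Positive integers k and n satisfy (k!)^n + k^(n!) = (n!)^k + n^(k!) if and only if k = n. -/
open Nat

lemma aux_le_two_pow (n : ℕ) (h : 1 ≤ n) : n ≤ 2 ^ (n - 1) := by
  induction n with
  | zero => omega
  | succ m ih =>
    rcases Nat.eq_or_lt_of_le h with h1 | h1
    · simp [← h1]
    · have hm : 1 ≤ m := by omega
      have := ih hm
      have h2 : 2 ^ (m - 1) * 2 = 2 ^ m := by
        rw [← pow_succ]
        congr 1
        omega
      have hp : 1 ≤ 2 ^ (m - 1) := Nat.one_le_two_pow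
      simp only [Nat.succ_sub_one]
      omega

lemma aux_fact_le (n : ℕ) (h : 4 ≤ n) : n ! ≤ 2 ^ ((n - 1)!) := by
  induction n with
  | zero => omega
  | succ m ih =>
    rcases Nat.lt_or_ge m 4 with h1 | h1
    · interval_cases m <;> first | (exfalso; omega) | decide
    · have hm := ih h1
      have hms : (m + 1) - 1 = m := rfl
      rw [hms, Nat.factorial_succ]
      have h2 : m + 1 ≤ 2 ^ m := by
        have := aux_le_two_pow (m + 1) (by omega)
        simpa using this
      calc (m + 1) * m ! ≤ 2 ^ m * 2 ^ ((m - 1)!) := Nat.mul_le_mul h2 hm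
        _ = 2 ^ (m + (m - 1)!) := (pow_add 2 m ((m-1)!)).symm
        _ ≤ 2 ^ (m !) := by
            apply Nat.pow_le_pow_right (by norm_num)
            have hfac : m ! = m * (m - 1)! := by
              conv_lhs => rw [show m = (m - 1) + 1 by omega]
              rw [Nat.factorial_succ]
              congr 1
              omega
            have h6 : 6 ≤ (m - 1)! := by
              calc 6 = (3)! := by decide
                _ ≤ (m - 1)! := Nat.factorial_le (by omega)
            nlinarith [hfac]

lemma key (k n : ℕ) (hk : 2 ≤ k) (hn : 4 ≤ n) (hkn : k < n) :
    (n !) ^ k + n ^ (k !) < (k !) ^ n + k ^ (n !) := by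
  set M := (n - 1) * ((n - 1)!) with hM
  have hM2 : M + 2 ≤ n ! := by
    have hfac : n ! = (n - 1) * ((n - 1)!) + (n - 1)! := by
      conv_lhs => rw [show n = (n - 1) + 1 by omega]
      rw [Nat.factorial_succ]
      ring
    have h2 : 2 ≤ (n - 1)! := by
      calc 2 = (2)! := by decide
        _ ≤ (n - 1)! := Nat.factorial_le (by omega)
    omega
  -- bound (n!)^k ≤ 2^(k * (n-1)!) ≤ 2^M
  have hb1 : (n !) ^ k ≤ 2 ^ M := by
    calc (n !) ^ k ≤ (2 ^ ((n - 1)!)) ^ k :=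
          Nat.pow_le_pow_left (aux_fact_le n hn) k
      _ = 2 ^ (((n - 1)!) * k) := by rw [← pow_mul]
      _ ≤ 2 ^ M := by
          apply Nat.pow_le_pow_right (by norm_num)
          rw [hM, mul_comm]
          exact Nat.mul_le_mul_right _ (by omega)
  have hb2 : n ^ (k !) ≤ 2 ^ M := by
    calc n ^ (k !) ≤ (2 ^ (n - 1)) ^ (k !) :=
          Nat.pow_le_pow_left (aux_le_two_pow n (by omega)) _
      _ = 2 ^ ((n - 1) * (k !)) := by rw [← pow_mul]
      _ ≤ 2 ^ M := by
          apply Nat.pow_le_pow_right (by norm_num)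
          exact Nat.mul_le_mul_left _ (Nat.factorial_le (by omega))
  have hchain : (n !) ^ k + n ^ (k !) < 2 ^ (n !) := by
    calc (n !) ^ k + n ^ (k !) ≤ 2 ^ M + 2 ^ M := Nat.add_le_add hb1 hb2
      _ < 2 ^ (M + 2) := by rw [pow_add]; have : 1 ≤ 2^M := Nat.one_le_two_pow; omega
      _ ≤ 2 ^ (n !) := Nat.pow_le_pow_right (by norm_num) hM2
  have h2k : 2 ^ (n !) ≤ k ^ (n !) := Nat.pow_le_pow_left hk _
  have hpos : 0 < (k !) ^ n := Nat.pow_pos (Nat.factorial_pos k)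
  omega

theorem stmt_11 (k n : ℕ) (hk : 0 < k) (hn : 0 < n) :
    ((Nat.factorial k) ^ n + k ^ (Nat.factorial n) =
      (Nat.factorial n) ^ k + n ^ (Nat.factorial k)) ↔ k = n := by
  constructor
  · intro h
    by_contra hne
    rcases lt_trichotomy k n with hlt | heq | hgt
    · -- k < n
      rcases Nat.lt_or_ge k 2 with hk1 | hk2
      · -- k = 1
        have hk1' : k = 1 := by omega
        subst hk1'
        simp [Nat.factorial] at h
        have h2 : 2 ≤ n := hlt
        have : n + 2 ≤ n ! + n := by
          have : 2 ≤ n ! := by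
            calc 2 = (2)! := by decide
              _ ≤ n ! := Nat.factorial_le h2
          omega
        omega
      · rcases Nat.lt_or_ge n 4 with hn3 | hn4
        · -- n = 3, k = 2
          have hk2' : k = 2 := by omega
          have hn3' : n = 3 := by omega
          subst hk2'; subst hn3'
          norm_num [Nat.factorial] at h
        · have := key k n hk2 hn4 hlt
          omega
    · exact hne heq
    · rcases Nat.lt_or_ge n 2 with hn1 | hn2
      · have hn1' : n = 1 := by omega
        subst hn1'
        simp [Nat.factorial] at h
        have h2 : 2 ≤ k := hgt
        have : 2 ≤ k ! := by
          calc 2 = (2)! := by decide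
            _ ≤ k ! := Nat.factorial_le h2
        omega
      · rcases Nat.lt_or_ge k 4 with hk3 | hk4
        · have hn2' : n = 2 := by omega
          have hk3' : k = 3 := by omega
          subst hn2'; subst hk3'
          norm_num [Nat.factorial] at h
        · have := key n k hn2 hk4 hgt
          omega
  · intro h; subst h; rfl
end
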